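/- (Stochastic dominance for the N-system) Suppose the events z^1, z^2, … driving the N-system are i.i.d. with P(z^n = a1) = λ_1/Σ, P(z^n = a2) = λ_2/Σ, P(z^n = p1) = μ_1/Σ, P(z^n = p2) = μ_2/Σ, where λ_1, λ_2, μ_1, μ_2 > 0 and Σ = λ_1+λ_2+μ_1+μ_2. Let N^q(T) and N^r(T) be the total numbers of customers just after event T in the FCFS-ALIS system and in the redundancy system respectively, each started empty (each system may be driven by its own copy of such an i.i.d. sequence). Then for every T, the total number under redundancy service stochastically dominates the total number under FCFS-ALIS minus one: for every integer k, P(N^q(T) ≥ k) ≤ P(N^r(T) ≥ k − 1). -/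

import Mathlib

/-- Customer types of the `N`-system: type-1 customers can be served by both servers,
type-2 customers only by server 2. -/
inductive CT : Type
  | one : CT
  | two : CT
  deriving DecidableEq, Inhabited

/-- Events driving the coupled `N`-systems: `a1`, `a2` are arrivals of type-1 and type-2
customers; `p1`, `p2` are potential service completions at server 1 and server 2. -/
inductive Ev : Type
  | a1 : Ev
  | a2 : Ev
  | p1 : Ev
  | p2 : Ev
  deriving DecidableEq, Inhabited

/-! ### System-r (redundancy): the state is the list of customers present, ordered by
arrival; each customer is recorded as (arrival event index, type).  Server 2 serves the
first customer of the list, server 1 serves the first type-1 customer of the list. -/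

/-- One transition of the redundancy system; `n` is the index of the current event. -/
def rstep (st : List (ℕ × CT)) (n : ℕ) : Ev → List (ℕ × CT)
  | Ev.a1 => st ++ [(n, CT.one)]
  | Ev.a2 => st ++ [(n, CT.two)]
  | Ev.p2 => st.tail
  | Ev.p1 => st.eraseP (fun p => p.2 == CT.one)

/-- The redundancy system started empty and driven by the events `z 1, z 2, …`. -/
def rrun (z : ℕ → Ev) : ℕ → List (ℕ × CT)
  | 0 => []
  | T + 1 => rstep (rrun z T) (T + 1) (z (T + 1))

/-- The waiting queue of the redundancy system: the customers not currently in service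
(the head is served by server 2; the first type-1 customer is served by server 1). -/
def rWaiting : List (ℕ × CT) → List (ℕ × CT)
  | [] => []
  | x :: rest => if x.2 = CT.one then rest else rest.eraseP (fun p => p.2 == CT.one)

/-- Location of customer `n` in the redundancy system: `0` if in service at the head,
`j ≥ 1` if in the `j`-th waiting position, `−1` if not present (departed). -/
def rloc (st : List (ℕ × CT)) (n : ℕ) : ℤ :=
  match st with
  | [] => -1
  | x :: _ =>
    if x.1 = n then 0
    else
      match (rWaiting st).findIdx? (fun p => p.1 == n) with
      | some i => (i : ℤ) + 1
      | none => -1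

/-! ### System-q (FCFS-ALIS): servers are indexed by `Fin 2` (`0` = server 1, `1` =
server 2); server 1 is compatible only with type-1 customers. -/

/-- State of the FCFS-ALIS system: the customer in service at each server, the FCFS
queue of waiting customers, and the ordered list of idle servers (longest idle first). -/
structure QState : Type where
  serving : Fin 2 → Option (ℕ × CT)
  queue : List (ℕ × CT)
  idle : List (Fin 2)

/-- Server `j` is compatible with customer type `t` (server 2 with all, server 1 only
with type 1). -/
def qCompat (j : Fin 2) (t : CT) : Bool := j == 1 || t == CT.one

/-- Arrival in the FCFS-ALIS system: the customer enters service at the longest idle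
compatible server if there is one, and otherwise joins the end of the queue. -/
def qArr (st : QState) (cust : ℕ × CT) : QState :=
  match st.idle.find? (fun j => qCompat j cust.2) with
  | some j =>
      { serving := fun i => if i = j then some cust else st.serving i,
        queue := st.queue,
        idle := st.idle.erase j }
  | none => { st with queue := st.queue ++ [cust] }

/-- Potential service completion at server `j` in the FCFS-ALIS system: if `j` is busy,
its customer departs and `j` picks the first compatible waiting customer, joining the
end of the idle list if there is none; if `j` is idle nothing changes. -/
def qDep (st : QState) (j : Fin 2) : QState :=
  match st.serving j with
  | none => st
  | some _ =>
      match st.queue.find? (fun p => qCompat j p.2) with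
      | some cust =>
          { serving := fun i => if i = j then some cust else st.serving i,
            queue := st.queue.eraseP (fun p => qCompat j p.2),
            idle := st.idle }
      | none =>
          { serving := fun i => if i = j then none else st.serving i,
            queue := st.queue,
            idle := st.idle ++ [j] }

/-- One transition of the FCFS-ALIS system; `n` is the index of the current event. -/
def qstep (st : QState) (n : ℕ) : Ev → QState
  | Ev.a1 => qArr st (n, CT.one)
  | Ev.a2 => qArr st (n, CT.two)
  | Ev.p1 => qDep st 0
  | Ev.p2 => qDep st 1

/-- The FCFS-ALIS system started empty (both servers idle) and driven by the events
`z 1, z 2, …`. -/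
def qrun (z : ℕ → Ev) : ℕ → QState
  | 0 => ⟨fun _ => none, [], [0, 1]⟩
  | T + 1 => qstep (qrun z T) (T + 1) (z (T + 1))

/-- Location of customer `n` in the FCFS-ALIS system: `0` if in service at server 2,
`j ≥ 1` if in the `j`-th waiting position, `−1` if not present (departed). -/
def qloc (st : QState) (n : ℕ) : ℤ :=
  if (st.serving 1).any (fun p => p.1 == n) then 0
  else
    match st.queue.findIdx? (fun p => p.1 == n) with
    | some i => (i : ℤ) + 1
    | none => -1

/-- Total number of customers present in the FCFS-ALIS system. -/
def qcount (st : QState) : ℕ :=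
  st.queue.length + (st.serving 0).toList.length + (st.serving 1).toList.length

instance : MeasurableSpace Ev := ⊤

open MeasureTheory

/-- The one-step probability of each event: `λ_1/Σ, λ_2/Σ, μ_1/Σ, μ_2/Σ` with
`Σ = λ_1+λ_2+μ_1+μ_2`. -/
noncomputable def evProb (lam1 lam2 mu1 mu2 : ℝ) : Ev → ENNReal
  | Ev.a1 => ENNReal.ofReal (lam1 / (lam1 + lam2 + mu1 + mu2))
  | Ev.a2 => ENNReal.ofReal (lam2 / (lam1 + lam2 + mu1 + mu2))
  | Ev.p1 => ENNReal.ofReal (mu1 / (lam1 + lam2 + mu1 + mu2))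
  | Ev.p2 => ENNReal.ofReal (mu2 / (lam1 + lam2 + mu1 + mu2))

/-! ### Auxiliary development: pathwise coupling invariant -/

section Coupling

abbrev Cust := ℕ × CT

/-- Ordered by arrival index. -/
def IdLt (a b : Cust) : Prop := a.1 < b.1

lemma pairwise_append_one {l : List Cust} {x : Cust} (h : l.Pairwise IdLt)
    (hx : ∀ a ∈ l, a.1 < x.1) : (l ++ [x]).Pairwise IdLt := by
  refine List.pairwise_append.mpr ⟨h, List.pairwise_singleton _ _, ?_⟩
  intro a ha b hb
  simp only [List.mem_singleton] at hb
  subst hb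
  exact hx a ha

lemma mem_eraseP_of_lt {p : Cust → Bool} {l : List Cust} {a b : Cust}
    (hl : l.Pairwise IdLt) (ha : a ∈ l) (hb : b ∈ l) (hpb : p b = true) (hba : b.1 < a.1) :
    a ∈ l.eraseP p := by
  induction l with
  | nil => cases ha
  | cons x t ih =>
    rcases List.pairwise_cons.mp hl with ⟨hx, ht⟩
    by_cases hpx : p x = true
    · rw [List.eraseP_cons_of_pos hpx]
      rcases List.mem_cons.mp ha with rfl | ha'
      · rcases List.mem_cons.mp hb with rfl | hb'
        · exact absurd hba (lt_irrefl _)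
        · exact absurd hba (by have := hx b hb'; unfold IdLt at this; omega)
      · exact ha'
    · rw [List.eraseP_cons_of_neg (by simpa using hpx)]
      rcases List.mem_cons.mp ha with rfl | ha'
      · exact List.mem_cons_self
      · refine List.mem_cons_of_mem _ ?_
        rcases List.mem_cons.mp hb with rfl | hb'
        · exact absurd hpb hpx
        · exact ih ht ha' hb'

lemma exists_earlier_of_mem_eraseP {p : Cust → Bool} {l : List Cust} {a : Cust}
    (hl : l.Pairwise IdLt) (ha : a ∈ l.eraseP p) (hpa : p a = true) :
    ∃ b ∈ l, p b = true ∧ b.1 < a.1 := by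
  induction l with
  | nil => simp at ha
  | cons x t ih =>
    rcases List.pairwise_cons.mp hl with ⟨hx, ht⟩
    by_cases hpx : p x = true
    · rw [List.eraseP_cons_of_pos hpx] at ha
      exact ⟨x, List.mem_cons_self, hpx, hx a ha⟩
    · rw [List.eraseP_cons_of_neg (by simpa using hpx)] at ha
      rcases List.mem_cons.mp ha with rfl | ha'
      · exact absurd hpa hpx
      · obtain ⟨b, hb, h1, h2⟩ := ih ht ha'
        exact ⟨b, List.mem_cons_of_mem _ hb, h1, h2⟩

lemma eraseP_sub {p : Cust → Bool} {qu l : List Cust}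
    (hq : qu.Pairwise IdLt) (hl : l.Pairwise IdLt) (hsub : ∀ c ∈ qu, c ∈ l) :
    ∀ c ∈ qu.eraseP p, c ∈ l.eraseP p := by
  intro c hc
  by_cases hpc : p c = true
  · obtain ⟨b, hb, hpb, hblt⟩ := exists_earlier_of_mem_eraseP hq hc hpc
    exact mem_eraseP_of_lt hl (hsub c (List.mem_of_mem_eraseP hc)) (hsub b hb) hpb hblt
  · exact (List.mem_eraseP_of_neg (by simpa using hpc)).mpr
      (hsub c (List.mem_of_mem_eraseP hc))

lemma pairwise_nodup {l : List Cust} (h : l.Pairwise IdLt) : l.Nodup :=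
  h.imp (fun hab => by rintro rfl; exact lt_irrefl _ hab)

lemma length_le_of_sub {l₁ l₂ : List Cust} (h₁ : l₁.Pairwise IdLt)
    (hsub : ∀ c ∈ l₁, c ∈ l₂) : l₁.length ≤ l₂.length :=
  ((pairwise_nodup h₁).subperm (fun _ hc => hsub _ hc)).length_le

/-- The coupling invariant between the FCFS-ALIS state and the redundancy list. -/
structure CInv (n : ℕ) (st : QState) (l : List Cust) : Prop where
  sub : ∀ c ∈ st.queue, c ∈ l
  qsort : st.queue.Pairwise IdLt
  lsort : l.Pairwise IdLt
  qlt : ∀ c ∈ st.queue, c.1 < n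
  llt : ∀ c ∈ l, c.1 < n
  s1q : st.serving 1 = none → st.queue = []
  s0q : st.serving 0 = none → ∀ c ∈ st.queue, c.2 = CT.two
  idle_iff : ∀ j, j ∈ st.idle ↔ st.serving j = none
  idle_nd : st.idle.Nodup
  cnt : qcount st ≤ l.length + 1

lemma qArr_eq_some {st : QState} {cust : Cust} {j : Fin 2}
    (h : st.idle.find? (fun j => qCompat j cust.2) = some j) :
    qArr st cust = { serving := fun i => if i = j then some cust else st.serving i,
                     queue := st.queue, idle := st.idle.erase j } := by
  unfold qArr; rw [h]

lemma qArr_eq_none {st : QState} {cust : Cust}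
    (h : st.idle.find? (fun j => qCompat j cust.2) = none) :
    qArr st cust = { st with queue := st.queue ++ [cust] } := by
  unfold qArr; rw [h]

lemma qDep_eq_idle {st : QState} {j : Fin 2} (h : st.serving j = none) :
    qDep st j = st := by
  unfold qDep; rw [h]

lemma qDep_eq_some {st : QState} {j : Fin 2} {c cust : Cust}
    (h : st.serving j = some c)
    (h2 : st.queue.find? (fun p => qCompat j p.2) = some cust) :
    qDep st j = { serving := fun i => if i = j then some cust else st.serving i,
                  queue := st.queue.eraseP (fun p => qCompat j p.2),
                  idle := st.idle } := by
  unfold qDep; rw [h, h2]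

lemma qDep_eq_none {st : QState} {j : Fin 2} {c : Cust}
    (h : st.serving j = some c)
    (h2 : st.queue.find? (fun p => qCompat j p.2) = none) :
    qDep st j = { serving := fun i => if i = j then none else st.serving i,
                  queue := st.queue, idle := st.idle ++ [j] } := by
  unfold qDep; rw [h, h2]

lemma toList_length_le (o : Option Cust) : o.toList.length ≤ 1 := by
  cases o <;> simp

lemma inv_arr {n : ℕ} {st : QState} {l : List Cust} (h : CInv n st l) (t : CT) :
    CInv (n+1) (qArr st (n, t)) (l ++ [(n, t)]) := by
  have hlsort' : (l ++ [(n, t)]).Pairwise IdLt :=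
    pairwise_append_one h.lsort (fun a ha => h.llt a ha)
  have hllt' : ∀ c ∈ l ++ [(n, t)], c.1 < n + 1 := by
    intro c hc
    rcases List.mem_append.mp hc with hc | hc
    · exact Nat.lt_succ_of_lt (h.llt c hc)
    · simp only [List.mem_singleton] at hc; subst hc; exact Nat.lt_succ_self n
  cases hfind : st.idle.find? (fun j => qCompat j (n, t).2) with
  | some j =>
    have hjmem : j ∈ st.idle := List.mem_of_find?_eq_some hfind
    have hjnone : st.serving j = none := (h.idle_iff j).mp hjmem
    rw [qArr_eq_some hfind]
    refine ⟨?_, h.qsort, hlsort', ?_, hllt', ?_, ?_, ?_, ?_, ?_⟩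
    · exact fun c hc => List.mem_append_left _ (h.sub c hc)
    · exact fun c hc => Nat.lt_succ_of_lt (h.qlt c hc)
    · intro hs1
      simp only at hs1
      by_cases h1j : (1 : Fin 2) = j
      · rw [if_pos h1j] at hs1; cases hs1
      · rw [if_neg h1j] at hs1; exact h.s1q hs1
    · intro hs0
      simp only at hs0
      by_cases h0j : (0 : Fin 2) = j
      · rw [if_pos h0j] at hs0; cases hs0
      · rw [if_neg h0j] at hs0; exact h.s0q hs0
    · intro i
      rw [List.Nodup.mem_erase_iff h.idle_nd]
      by_cases hij : i = j
      · subst hij; simp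
      · simp only [hij, if_neg hij, ne_eq, not_false_iff, true_and]
        exact h.idle_iff i
    · exact h.idle_nd.erase j
    · have hsplit : j = 0 ∨ j = 1 := by fin_cases j <;> simp
      have hlen : (l ++ [(n, t)]).length = l.length + 1 := by simp
      have hc := h.cnt
      unfold qcount at hc ⊢
      simp only
      rcases hsplit with rfl | rfl
      · rw [if_pos rfl, if_neg (by decide : ¬ (1 : Fin 2) = 0)]
        rw [hjnone] at hc
        simp only [Option.toList_none, List.length_nil, Option.toList_some,
          List.length_cons] at hc ⊢
        omega
      · rw [if_pos rfl, if_neg (by decide : ¬ (0 : Fin 2) = 1)]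
        rw [hjnone] at hc
        simp only [Option.toList_none, List.length_nil, Option.toList_some,
          List.length_cons] at hc ⊢
        omega
  | none =>
    have hnone : ∀ x ∈ st.idle, ¬ qCompat x (n, t).2 = true := List.find?_eq_none.mp hfind
    rw [qArr_eq_none hfind]
    refine ⟨?_, pairwise_append_one h.qsort (fun a ha => h.qlt a ha), hlsort', ?_, hllt',
      ?_, ?_, h.idle_iff, h.idle_nd, ?_⟩
    · intro c hc
      rcases List.mem_append.mp hc with hc | hc
      · exact List.mem_append_left _ (h.sub c hc)
      · exact List.mem_append_right _ hc
    · intro c hc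
      rcases List.mem_append.mp hc with hc | hc
      · exact Nat.lt_succ_of_lt (h.qlt c hc)
      · simp only [List.mem_singleton] at hc; subst hc; exact Nat.lt_succ_self n
    · intro hs1
      exact absurd (by simp [qCompat] : qCompat 1 (n, t).2 = true)
        (hnone 1 ((h.idle_iff 1).mpr hs1))
    · intro hs0 c hc
      have h0 : ¬ qCompat 0 (n, t).2 = true := hnone 0 ((h.idle_iff 0).mpr hs0)
      cases t with
      | one => exact absurd (by simp [qCompat] : qCompat 0 (n, CT.one).2 = true) h0
      | two =>
        rcases List.mem_append.mp hc with hc | hc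
        · exact h.s0q hs0 c hc
        · simp only [List.mem_singleton] at hc; subst hc; rfl
    · have hc := h.cnt
      unfold qcount at hc ⊢
      simp only [List.length_append, List.length_singleton]
      omega

lemma inv_p2 {n : ℕ} {st : QState} {l : List Cust} (h : CInv n st l) :
    CInv (n+1) (qDep st 1) l.tail := by
  have hlsort' : l.tail.Pairwise IdLt := h.lsort.sublist (List.tail_sublist l)
  have hllt' : ∀ c ∈ l.tail, c.1 < n + 1 :=
    fun c hc => Nat.lt_succ_of_lt (h.llt c ((List.tail_sublist l).subset hc))
  have htl : l.tail.length + 1 ≥ l.length := by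
    cases l <;> simp
  cases hs1 : st.serving 1 with
  | none =>
    have hq : st.queue = [] := h.s1q hs1
    rw [qDep_eq_idle hs1]
    refine ⟨?_, h.qsort, hlsort', ?_, hllt', h.s1q, h.s0q, h.idle_iff, h.idle_nd, ?_⟩
    · intro c hc; rw [hq] at hc; cases hc
    · intro c hc; exact Nat.lt_succ_of_lt (h.qlt c hc)
    · unfold qcount
      rw [hq, hs1]
      have := toList_length_le (st.serving 0)
      simp only [List.length_nil, Option.toList_none]
      omega
  | some c =>
    cases hq : st.queue with
    | nil =>
      have hfind : st.queue.find? (fun p => qCompat 1 p.2) = none := by rw [hq]; rfl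
      rw [qDep_eq_none hs1 hfind]
      have h1notidle : (1 : Fin 2) ∉ st.idle := by
        intro hmem
        rw [(h.idle_iff 1).mp hmem] at hs1; cases hs1
      refine ⟨?_, h.qsort, hlsort', ?_, hllt', ?_, ?_, ?_, ?_, ?_⟩
      · intro c hc; rw [hq] at hc; cases hc
      · intro c hc; exact Nat.lt_succ_of_lt (h.qlt c hc)
      · intro _; exact hq
      · intro hs0 c' hc'
        simp only [if_neg (by decide : ¬ (0 : Fin 2) = 1)] at hs0
        exact h.s0q hs0 c' hc'
      · intro i
        simp only [List.mem_append, List.mem_singleton]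
        by_cases hi1 : i = 1
        · subst hi1; simp
        · simp only [hi1, or_false, if_neg hi1]
          exact h.idle_iff i
      · refine h.idle_nd.append (List.nodup_singleton _) ?_
        intro a ha hb
        simp only [List.mem_singleton] at hb
        subst hb
        exact h1notidle ha
      · have hc := h.cnt
        unfold qcount at hc ⊢
        rw [hq, hs1] at hc
        rw [hq]
        simp only [List.length_nil, Option.toList_some, List.length_cons,
          Option.toList_none] at hc
        simp
        omega
    | cons x rest =>
      have hfind : st.queue.find? (fun p => qCompat 1 p.2) = some x := by
        rw [hq]; exact List.find?_cons_of_pos (by simp [qCompat])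
      rw [qDep_eq_some hs1 hfind]
      have herase : st.queue.eraseP (fun p => qCompat 1 p.2) = rest := by
        rw [hq]; exact List.eraseP_cons_of_pos (by simp [qCompat])
      have hxl : x ∈ l := h.sub x (by rw [hq]; exact List.mem_cons_self)
      obtain ⟨hd, lt, rfl⟩ : ∃ hd lt, l = hd :: lt := by
        cases l with
        | nil => cases hxl
        | cons hd lt => exact ⟨hd, lt, rfl⟩
      have hhdmin : ∀ y ∈ lt, hd.1 < y.1 := by
        intro y hy; exact (List.pairwise_cons.mp h.lsort).1 y hy
      have hqsort : List.Pairwise IdLt (x :: rest) := hq ▸ h.qsort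
      have hxgt : ∀ c' ∈ rest, x.1 < c'.1 := fun c' hc' =>
        (List.pairwise_cons.mp hqsort).1 c' hc'
      refine ⟨?_, ?_, hlsort', ?_, hllt', ?_, ?_, ?_, h.idle_nd, ?_⟩
      · -- sub : rest ⊆ lt
        intro c' hc'
        rw [herase] at hc'
        have hcl : c' ∈ hd :: lt := h.sub c' (by rw [hq]; exact List.mem_cons_of_mem _ hc')
        rcases List.mem_cons.mp hcl with rfl | hmem
        · -- c' = hd : impossible
          exfalso
          rcases List.mem_cons.mp hxl with hx1 | hx2
          · have := hxgt c' hc'; rw [hx1] at this; omega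
          · have h1 := hhdmin x hx2
            have h2 := hxgt c' hc'
            omega
        · exact hmem
      · rw [herase]
        exact (List.pairwise_cons.mp hqsort).2
      · intro c' hc'
        rw [herase] at hc'
        exact Nat.lt_succ_of_lt (h.qlt c' (by rw [hq]; exact List.mem_cons_of_mem _ hc'))
      · intro hnone
        simp only [if_pos rfl] at hnone; cases hnone
      · intro hs0 c' hc'
        simp only [if_neg (by decide : ¬ (0 : Fin 2) = 1)] at hs0
        rw [herase] at hc'
        exact h.s0q hs0 c' (by rw [hq]; exact List.mem_cons_of_mem _ hc')
      · intro i
        by_cases hi1 : i = 1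
        · subst hi1
          simp only [if_pos rfl]
          constructor
          · intro hmem; rw [(h.idle_iff 1).mp hmem] at hs1; cases hs1
          · intro hc'; cases hc'
        · simp only [if_neg hi1]
          exact h.idle_iff i
      · have hc := h.cnt
        unfold qcount at hc ⊢
        rw [hq, hs1] at hc
        rw [herase]
        simp only [List.length_cons, Option.toList_some, List.tail_cons] at hc
        simp
        omega

lemma pred_eq : (fun p : Cust => p.2 == CT.one) = (fun p : Cust => qCompat 0 p.2) := by
  funext p
  rcases p with ⟨i, t⟩
  cases t <;> rfl

lemma inv_p1 {n : ℕ} {st : QState} {l : List Cust} (h : CInv n st l) :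
    CInv (n+1) (qDep st 0) (l.eraseP (fun p => p.2 == CT.one)) := by
  rw [pred_eq]
  have hp : (fun q : Cust => qCompat 0 q.2) = (fun q : Cust => qCompat 0 q.2) := rfl
  have hlsort' : (l.eraseP (fun q : Cust => qCompat 0 q.2)).Pairwise IdLt := h.lsort.sublist List.eraseP_sublist
  have hllt' : ∀ c ∈ l.eraseP (fun q : Cust => qCompat 0 q.2), c.1 < n + 1 :=
    fun c hc => Nat.lt_succ_of_lt (h.llt c (List.mem_of_mem_eraseP hc))
  have hp2 : ∀ c : Cust, c.2 = CT.two → ¬ qCompat 0 c.2 = true := by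
    intro c hc
    rcases c with ⟨i, t⟩
    simp only at hc
    subst hc
    simp [qCompat]
  cases hs0 : st.serving 0 with
  | none =>
    have hq2 : ∀ c ∈ st.queue, c.2 = CT.two := h.s0q hs0
    have hsub' : ∀ c ∈ st.queue, c ∈ l.eraseP (fun q : Cust => qCompat 0 q.2) := by
      intro c hc
      exact (List.mem_eraseP_of_neg (by simpa using hp2 c (hq2 c hc))).mpr (h.sub c hc)
    rw [qDep_eq_idle hs0]
    refine ⟨hsub', h.qsort, hlsort', ?_, hllt', h.s1q, h.s0q, h.idle_iff, h.idle_nd, ?_⟩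
    · intro c hc; exact Nat.lt_succ_of_lt (h.qlt c hc)
    · have hqlen : st.queue.length ≤ (l.eraseP (fun q : Cust => qCompat 0 q.2)).length := length_le_of_sub h.qsort hsub'
      unfold qcount
      rw [hs0]
      have := toList_length_le (st.serving 1)
      simp only [Option.toList_none, List.length_nil]
      omega
  | some c0 =>
    cases hfind : st.queue.find? (fun p => qCompat 0 p.2) with
    | none =>
      have hq2 : ∀ c ∈ st.queue, c.2 = CT.two := by
        intro c hc
        have := List.find?_eq_none.mp hfind c hc
        rcases c with ⟨i, t⟩
        cases t
        · exact absurd (by simp [qCompat]) this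
        · rfl
      have hsub' : ∀ c ∈ st.queue, c ∈ l.eraseP (fun q : Cust => qCompat 0 q.2) := by
        intro c hc
        exact (List.mem_eraseP_of_neg (by simpa using hp2 c (hq2 c hc))).mpr (h.sub c hc)
      rw [qDep_eq_none hs0 hfind]
      have h0notidle : (0 : Fin 2) ∉ st.idle := by
        intro hmem
        rw [(h.idle_iff 0).mp hmem] at hs0; cases hs0
      refine ⟨hsub', h.qsort, hlsort', ?_, hllt', ?_, ?_, ?_, ?_, ?_⟩
      · intro c hc; exact Nat.lt_succ_of_lt (h.qlt c hc)
      · intro hs1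
        simp only [if_neg (by decide : ¬ (1 : Fin 2) = 0)] at hs1
        exact h.s1q hs1
      · intro _ c hc; exact hq2 c hc
      · intro i
        simp only [List.mem_append, List.mem_singleton]
        by_cases hi0 : i = 0
        · subst hi0; simp
        · simp only [hi0, or_false, if_neg hi0]
          exact h.idle_iff i
      · refine h.idle_nd.append (List.nodup_singleton _) ?_
        intro a ha hb
        simp only [List.mem_singleton] at hb
        subst hb
        exact h0notidle ha
      · have hqlen : st.queue.length ≤ (l.eraseP (fun q : Cust => qCompat 0 q.2)).length := length_le_of_sub h.qsort hsub'
        unfold qcount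
        have := toList_length_le (st.serving 1)
        simp
        omega
    | some y =>
      have hymem : y ∈ st.queue := List.mem_of_find?_eq_some hfind
      have hpy : (fun q : Cust => qCompat 0 q.2) y = true := List.find?_some (p := fun q : Cust => qCompat 0 q.2) hfind
      have hyl : y ∈ l := h.sub y hymem
      have hllen : (l.eraseP (fun q : Cust => qCompat 0 q.2)).length = l.length - 1 :=
        List.length_eraseP_of_mem hyl hpy
      have hqlen : (st.queue.eraseP (fun q : Cust => qCompat 0 q.2)).length = st.queue.length - 1 :=
        List.length_eraseP_of_mem hymem hpy
      have hsub' : ∀ c ∈ st.queue.eraseP (fun q : Cust => qCompat 0 q.2), c ∈ l.eraseP (fun q : Cust => qCompat 0 q.2) :=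
        eraseP_sub h.qsort h.lsort h.sub
      rw [qDep_eq_some hs0 hfind]
      refine ⟨hsub', h.qsort.eraseP (fun q : Cust => qCompat 0 q.2), hlsort', ?_, hllt', ?_, ?_, ?_, h.idle_nd, ?_⟩
      · intro c hc
        exact Nat.lt_succ_of_lt (h.qlt c (List.mem_of_mem_eraseP hc))
      · intro hs1
        simp only [if_neg (by decide : ¬ (1 : Fin 2) = 0)] at hs1
        rw [h.s1q hs1]
        rfl
      · intro hnone
        simp only [if_pos rfl] at hnone; cases hnone
      · intro i
        by_cases hi0 : i = 0
        · subst hi0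
          simp only [if_pos rfl]
          constructor
          · intro hmem; rw [(h.idle_iff 0).mp hmem] at hs0; cases hs0
          · intro hc'; cases hc'
        · simp only [if_neg hi0]
          exact h.idle_iff i
      · have hc := h.cnt
        have hql : 0 < st.queue.length := List.length_pos_iff.mpr
          (fun hnil => by rw [hnil] at hymem; cases hymem)
        have hll : 0 < l.length := List.length_pos_iff.mpr
          (fun hnil => by rw [hnil] at hyl; cases hyl)
        unfold qcount at hc ⊢
        rw [hs0] at hc
        have := toList_length_le (st.serving 1)
        simp only [Option.toList_some, List.length_cons] at hc
        show (st.queue.eraseP (fun q : Cust => qCompat 0 q.2)).length + 1 +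
            (st.serving 1).toList.length ≤
            (l.eraseP (fun q : Cust => qCompat 0 q.2)).length + 1
        rw [hqlen, hllen]
        omega

lemma inv_step {n : ℕ} {st : QState} {l : List Cust} (h : CInv n st l) (e : Ev) :
    CInv (n+1) (qstep st n e) (rstep l n e) := by
  cases e with
  | a1 => exact inv_arr h CT.one
  | a2 => exact inv_arr h CT.two
  | p1 => exact inv_p1 h
  | p2 => exact inv_p2 h

lemma inv_run (z : ℕ → Ev) (T : ℕ) : CInv (T+1) (qrun z T) (rrun z T) := by
  induction T with
  | zero =>
    show CInv 1 ⟨fun _ => none, [], [0, 1]⟩ []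
    refine ⟨?_, List.Pairwise.nil, List.Pairwise.nil, ?_, ?_, ?_, ?_, ?_, ?_, ?_⟩
    · intro c hc; cases hc
    · intro c hc; cases hc
    · intro c hc; cases hc
    · intro _; rfl
    · intro _ c hc; cases hc
    · intro j
      constructor
      · intro _; rfl
      · intro _; fin_cases j <;> simp
    · decide
    · exact Nat.zero_le _
  | succ T ih => exact inv_step ih (z (T+1))

lemma pathwise (z : ℕ → Ev) (T : ℕ) :
    qcount (qrun z T) ≤ (rrun z T).length + 1 :=
  (inv_run z T).cnt

lemma qrun_congr {z w : ℕ → Ev} : ∀ {T : ℕ},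
    (∀ i, 1 ≤ i → i ≤ T → z i = w i) → qrun z T = qrun w T := by
  intro T
  induction T with
  | zero => intro _; rfl
  | succ T ih =>
    intro h
    show qstep (qrun z T) (T+1) (z (T+1)) = qstep (qrun w T) (T+1) (w (T+1))
    rw [ih (fun i h1 h2 => h i h1 (Nat.le_trans h2 (Nat.le_succ T))),
      h (T+1) (by omega) le_rfl]

instance : Fintype Ev :=
  ⟨⟨{Ev.a1, Ev.a2, Ev.p1, Ev.p2}, by decide⟩, fun x => by cases x <;> decide⟩

/-- Extends a finite event vector (indices `1..T` shifted to `Fin T`) to `ℕ → Ev`. -/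
def extFn (T : ℕ) (v : Fin T → Ev) : ℕ → Ev :=
  fun i => if h : i - 1 < T then v ⟨i - 1, h⟩ else Ev.a1

/-- The cylinder set determined by the event vector `v` on indices `1..T`. -/
def CSet (T : ℕ) (v : Fin T → Ev) : Set (ℕ → Ev) :=
  {z | ∀ i ∈ Finset.Icc 1 T, z i = extFn T v i}

lemma extFn_eval {T : ℕ} (v : Fin T → Ev) (i : Fin T) : extFn T v (i.1 + 1) = v i := by
  have hlt : i.1 + 1 - 1 < T := by have := i.isLt; omega
  show (if h : i.1 + 1 - 1 < T then v ⟨i.1 + 1 - 1, h⟩ else Ev.a1) = v i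
  rw [dif_pos hlt]
  exact congrArg v (Fin.ext (by simp))

lemma mem_CSet_self {T : ℕ} (z : ℕ → Ev) : z ∈ CSet T (fun j : Fin T => z (j.1 + 1)) := by
  intro i hi
  rcases Finset.mem_Icc.mp hi with ⟨h1, h2⟩
  have hlt : i - 1 < T := by omega
  show z i = if h : i - 1 < T then z ((⟨i - 1, h⟩ : Fin T).1 + 1) else Ev.a1
  rw [dif_pos hlt]
  exact congrArg z (by omega : i = i - 1 + 1)

lemma qrun_CSet {T : ℕ} {v : Fin T → Ev} {z : ℕ → Ev} (hz : z ∈ CSet T v) :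
    qrun z T = qrun (extFn T v) T :=
  qrun_congr (fun i h1 h2 => hz i (Finset.mem_Icc.mpr ⟨h1, h2⟩))

lemma measurable_CSet {T : ℕ} (v : Fin T → Ev) : MeasurableSet (CSet T v) := by
  have : CSet T v = ⋂ i ∈ Finset.Icc 1 T, (fun z : ℕ → Ev => z i) ⁻¹' {extFn T v i} := by
    ext z
    simp [CSet, Set.mem_iInter]
  rw [this]
  exact MeasurableSet.biInter (Finset.Icc 1 T).countable_toSet
    (fun i _ => (measurable_pi_apply i) MeasurableSpace.measurableSet_top)

end Coupling

/-- Stochastic dominance for the `N`-system: if each system is started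
empty and driven by its own i.i.d. event sequence with the probabilities above, then for
every `T` and every integer `k`,
`P(N^q(T) ≥ k) ≤ Q(N^r(T) ≥ k − 1)`. -/
theorem stmt16 (lam1 lam2 mu1 mu2 : ℝ)
    (hl1 : 0 < lam1) (hl2 : 0 < lam2) (hm1 : 0 < mu1) (hm2 : 0 < mu2)
    (P Q : Measure (ℕ → Ev)) [IsProbabilityMeasure P] [IsProbabilityMeasure Q]
    (hP : ∀ (I : Finset ℕ) (v : ℕ → Ev),
      P {z | ∀ i ∈ I, z i = v i} = ∏ i ∈ I, evProb lam1 lam2 mu1 mu2 (v i))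
    (hQ : ∀ (I : Finset ℕ) (v : ℕ → Ev),
      Q {z | ∀ i ∈ I, z i = v i} = ∏ i ∈ I, evProb lam1 lam2 mu1 mu2 (v i)) :
    ∀ (T : ℕ) (k : ℤ),
      P {z | k ≤ (qcount (qrun z T) : ℤ)} ≤ Q {z | k - 1 ≤ ((rrun z T).length : ℤ)} := by
  intro T k
  classical
  have hsub : {z : ℕ → Ev | k ≤ (qcount (qrun z T) : ℤ)} ⊆
      {z : ℕ → Ev | k - 1 ≤ ((rrun z T).length : ℤ)} := by
    intro z hz
    simp only [Set.mem_setOf_eq] at hz ⊢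
    have := pathwise z T
    omega
  let S : Finset (Fin T → Ev) :=
    Finset.univ.filter (fun v => k ≤ (qcount (qrun (extFn T v) T) : ℤ))
  have hA : {z : ℕ → Ev | k ≤ (qcount (qrun z T) : ℤ)} = ⋃ v ∈ S, CSet T v := by
    ext z
    simp only [Set.mem_setOf_eq, Set.mem_iUnion, exists_prop]
    constructor
    · intro hz
      refine ⟨fun j : Fin T => z (j.1 + 1), ?_, mem_CSet_self z⟩
      refine Finset.mem_filter.mpr ⟨Finset.mem_univ _, ?_⟩
      rw [← qrun_CSet (mem_CSet_self z)]
      exact hz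
    · rintro ⟨v, hvS, hzC⟩
      rw [qrun_CSet hzC]
      exact (Finset.mem_filter.mp hvS).2
  have hdisj : (↑S : Set (Fin T → Ev)).PairwiseDisjoint (CSet T) := by
    intro v _ w _ hvw
    refine Set.disjoint_left.mpr ?_
    intro z hzv hzw
    apply hvw
    funext i
    have hmem : i.1 + 1 ∈ Finset.Icc 1 T :=
      Finset.mem_Icc.mpr ⟨by omega, by have := i.isLt; omega⟩
    have h1 : z (i.1 + 1) = extFn T v (i.1 + 1) := hzv _ hmem
    have h2 : z (i.1 + 1) = extFn T w (i.1 + 1) := hzw _ hmem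
    rw [extFn_eval v i] at h1
    rw [extFn_eval w i] at h2
    exact h1.symm.trans h2
  have hPA : P {z : ℕ → Ev | k ≤ (qcount (qrun z T) : ℤ)}
      = ∑ v ∈ S, ∏ i ∈ Finset.Icc 1 T, evProb lam1 lam2 mu1 mu2 (extFn T v i) := by
    rw [hA, measure_biUnion_finset hdisj (fun v _ => measurable_CSet v)]
    exact Finset.sum_congr rfl (fun v _ => hP (Finset.Icc 1 T) (extFn T v))
  have hQA : Q {z : ℕ → Ev | k ≤ (qcount (qrun z T) : ℤ)}
      = ∑ v ∈ S, ∏ i ∈ Finset.Icc 1 T, evProb lam1 lam2 mu1 mu2 (extFn T v i) := by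
    rw [hA, measure_biUnion_finset hdisj (fun v _ => measurable_CSet v)]
    exact Finset.sum_congr rfl (fun v _ => hQ (Finset.Icc 1 T) (extFn T v))
  calc P {z : ℕ → Ev | k ≤ (qcount (qrun z T) : ℤ)}
      = Q {z : ℕ → Ev | k ≤ (qcount (qrun z T) : ℤ)} := by rw [hPA, hQA]
    _ ≤ Q {z : ℕ → Ev | k - 1 ≤ ((rrun z T).length : ℤ)} := measure_mono hsub
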